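/- With A₁, A₂ closed in K^n and U₁ = ⋃{ B(x,r) : x ∈ A₁\A₂, 0 < r < dist(x,A₂) }, the set U₁ ∪ (A₁ ∩ A₂) is closed in K^n. -/

import Mathlib

open EMetric

section Aux

variable {X : Type*} [PseudoMetricSpace X] [IsUltrametricDist X]

lemma edist_triangle_max' (x y z : X) : edist x z ≤ max (edist x y) (edist y z) := by
  rw [edist_dist, edist_dist, edist_dist,
    ← Monotone.map_max (fun _ _ h => ENNReal.ofReal_le_ofReal h)]
  exact ENNReal.ofReal_le_ofReal (dist_triangle_max x y z)

/-- If `edist y z < infEdist z s` then the distances to `s` agree. -/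
lemma infEdist_eq_of_lt {s : Set X} {y z : X}
    (h : edist y z < infEdist z s) : infEdist y s = infEdist z s := by
  have key : ∀ a ∈ s, edist y a = edist z a := by
    intro a ha
    have hz : edist z y < edist z a :=
      lt_of_lt_of_le (by rwa [edist_comm] at h) (infEdist_le_edist_of_mem ha)
    have h1 : edist y a ≤ edist z a := by
      have := edist_triangle_max' y z a
      rwa [max_eq_right (le_of_lt (by rwa [edist_comm] at hz))] at this
    have h2 : edist z a ≤ edist y a := by
      have := edist_triangle_max' z y a
      rcases le_max_iff.mp this with h' | h'
      · exact absurd h' (not_le.mpr hz)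
      · exact h'
    exact le_antisymm h1 h2
  simp only [infEdist]
  exact iInf_congr fun a => iInf_congr fun ha => by rw [key a ha]

lemma infEdist_le_max {s : Set X} (y z : X) :
    infEdist y s ≤ max (edist y z) (infEdist z s) := by
  by_contra hc
  push_neg at hc
  rw [max_lt_iff] at hc
  obtain ⟨a, ha, haz⟩ := infEdist_lt_iff.mp hc.2
  exact absurd ((infEdist_le_edist_of_mem ha).trans (edist_triangle_max' y z a))
    (not_le.mpr (by rw [max_lt_iff]; exact ⟨hc.1, haz⟩))

end Aux

instance {K : Type*} [NormedField K] [IsUltrametricDist K] {n : ℕ} :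
    IsUltrametricDist (Fin n → K) := by
  constructor
  intro x y z
  rw [dist_pi_le_iff (le_max_iff.mpr (Or.inl dist_nonneg))]
  intro i
  exact (dist_triangle_max (x i) (y i) (z i)).trans
    (max_le_max (dist_le_pi_dist x y i) (dist_le_pi_dist y z i))

/-- For closed `A₁, A₂ ⊆ K^n` and `U₁` the union of all balls `B(x,r)` with
`x ∈ A₁ \ A₂`, `r < dist(x, A₂)`, the set `U₁ ∪ (A₁ ∩ A₂)` is closed. -/
theorem U1_union_inter_closed {K : Type*} [NormedField K] [IsUltrametricDist K]
    {n : ℕ} (A₁ A₂ : Set (Fin n → K)) (h₁ : IsClosed A₁) (h₂ : IsClosed A₂) :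
    IsClosed ((⋃ x ∈ A₁ \ A₂, ⋃ r ∈ Set.Iio (EMetric.infEdist x A₂), EMetric.ball x r)
      ∪ (A₁ ∩ A₂)) := by
  rw [← isOpen_compl_iff]
  rw [EMetric.isOpen_iff]
  intro z hz
  simp only [Set.mem_compl_iff, Set.mem_union, not_or] at hz
  obtain ⟨hzU, hzI⟩ := hz
  -- membership in U₁ characterization helper
  have memU : ∀ w : Fin n → K, w ∈ A₁ → w ∉ A₂ → ∀ v, edist v w < infEdist w A₂ →
      v ∈ (⋃ x ∈ A₁ \ A₂, ⋃ r ∈ Set.Iio (EMetric.infEdist x A₂), EMetric.ball x r) := by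
    intro w hw1 hw2 v hv
    obtain ⟨r, hr1, hr2⟩ := exists_between hv
    refine Set.mem_iUnion₂.mpr ⟨w, ⟨hw1, hw2⟩, Set.mem_iUnion₂.mpr ⟨r, hr2, ?_⟩⟩
    exact EMetric.mem_ball.mpr hr1
  -- z ∉ A₁
  have hzA₁ : z ∉ A₁ := by
    intro hzA
    rcases Classical.em (z ∈ A₂) with h | h
    · exact hzI ⟨hzA, h⟩
    · apply hzU
      apply memU z hzA h z
      rw [edist_self]
      rw [pos_iff_ne_zero]
      intro h0
      exact h ((EMetric.mem_iff_infEdist_zero_of_closed h₂).mpr h0)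
  set ε := infEdist z A₁ with hε
  have hεpos : 0 < ε := by
    rw [hε, pos_iff_ne_zero]
    intro h0
    exact hzA₁ ((EMetric.mem_iff_infEdist_zero_of_closed h₁).mpr h0)
  -- infEdist z A₂ ≤ ε
  have hA₂le : infEdist z A₂ ≤ ε := by
    by_contra hc
    push_neg at hc
    obtain ⟨x, hxA₁, hxz⟩ := infEdist_lt_iff.mp hc
    rw [edist_comm] at hxz
    have hxd : infEdist x A₂ = infEdist z A₂ := infEdist_eq_of_lt hxz
    have hxA₂ : x ∉ A₂ := by
      intro hx
      have : (0:ENNReal) < infEdist z A₂ := hεpos.trans hc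
      rw [← hxd, show infEdist x A₂ = 0 from EMetric.infEdist_zero_of_mem hx] at this
      exact lt_irrefl 0 this
    exact hzU (memU x hxA₁ hxA₂ z (by rw [hxd, edist_comm]; exact hxz))
  refine ⟨ε, hεpos, fun y hy => ?_⟩
  rw [EMetric.mem_ball] at hy
  have hyA₁ : infEdist y A₁ = ε := infEdist_eq_of_lt hy
  simp only [Set.mem_compl_iff, Set.mem_union, not_or]
  constructor
  · -- y ∉ U₁
    intro hyU
    simp only [Set.mem_iUnion, Set.mem_Iio, EMetric.mem_ball] at hyU
    obtain ⟨x, ⟨hxA₁, hxA₂⟩, r, hr, hyx⟩ := hyU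
    have hyx' : edist y x < infEdist x A₂ := hyx.trans hr
    have h1 : infEdist y A₂ = infEdist x A₂ := infEdist_eq_of_lt hyx'
    have h2 : ε < infEdist y A₂ := by
      rw [h1]
      exact lt_of_le_of_lt (hyA₁ ▸ infEdist_le_edist_of_mem hxA₁) hyx'
    have h3 : infEdist y A₂ ≤ ε :=
      (infEdist_le_max y z).trans (max_le hy.le hA₂le)
    exact absurd h3 (not_le.mpr h2)
  · -- y ∉ A₁ ∩ A₂
    intro ⟨hy1, _⟩
    rw [show infEdist y A₁ = 0 from EMetric.infEdist_zero_of_mem hy1] at hyA₁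
    exact absurd hyA₁.symm (ne_of_gt hεpos)
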